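/- Let $n \ge 3$ be an integer, let $q > n/2$ be real, and let $\sigma \ge 0$. Define the moment sums $M_q(v) = \sum_{j=1}^v \big(\sigma + j^{1/n}\big)^{-2q}$. Then $\lim_{v\to\infty} \frac{\log M_q(v) - q\,\log M_1(v)}{(1-q)\,\log v} = 1 - \frac{2q-n}{n(q-1)}.$ -/
import Mathlib

open Filter Real Finset

lemma sum_Icc_one_eq_range (f : ℕ → ℝ) (v : ℕ) :
    ∑ j ∈ Finset.Icc 1 v, f j = ∑ i ∈ Finset.range v, f (1 + i) := by
  rw [← Finset.Ico_add_one_right_eq_Icc, Finset.sum_Ico_eq_sum_range]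
  simp

lemma sum_rpow_neg_le (a : ℝ) (ha : 0 < a) (ha1 : a < 1) (v : ℕ) (hv : 1 ≤ v) :
    ∑ j ∈ Finset.Icc 1 v, (j : ℝ) ^ (-a) ≤ (1 + 1/(1-a)) * (v : ℝ) ^ (1-a) := by
  have hb : (0:ℝ) < 1 - a := by linarith
  have hv1 : (1:ℝ) ≤ (v:ℝ) := by exact_mod_cast hv
  have hvb : (1:ℝ) ≤ (v:ℝ) ^ (1-a) := Real.one_le_rpow hv1 hb.le
  obtain ⟨w, rfl⟩ : ∃ w, v = w + 1 := ⟨v - 1, (Nat.succ_pred_eq_of_pos hv).symm⟩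
  rw [sum_Icc_one_eq_range, Finset.sum_range_succ']
  have hint : ∑ i ∈ Finset.range w, (((1:ℝ) + ((i+1 : ℕ):ℝ))) ^ (-a)
      ≤ ∫ x in (1:ℝ)..((1:ℝ) + (w:ℕ)), x ^ (-a) := by
    have hmono : AntitoneOn (fun x : ℝ => x ^ (-a)) (Set.Icc (1:ℝ) (1 + (w:ℕ))) := by
      intro x hx y hy hxy
      exact Real.rpow_le_rpow_of_nonpos (lt_of_lt_of_le one_pos hx.1) hxy (by linarith)
    exact AntitoneOn.sum_le_integral (x₀ := (1:ℝ)) (a := w) (f := fun x => x ^ (-a)) hmono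
  have hIval : ∫ x in (1:ℝ)..((1:ℝ) + (w:ℕ)), x ^ (-a)
      = ((((1:ℝ) + (w:ℕ))) ^ (-a+1) - 1 ^ (-a+1)) / (-a+1) := by
    rw [integral_rpow (Or.inl (by linarith))]
  have hcast : ((1:ℝ) + ((w:ℕ):ℝ)) = (((w+1 : ℕ)) : ℝ) := by push_cast; ring
  have h1a : (-a + 1) = 1 - a := by ring
  have h2 : ∑ i ∈ Finset.range w, (((1 + (i+1) : ℕ)) : ℝ) ^ (-a)
      ≤ ((w+1:ℕ) : ℝ) ^ (1-a) / (1-a) := by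
    have heq : ∀ i : ℕ, (((1 + (i+1) : ℕ)) : ℝ) ^ (-a) = ((1:ℝ) + ((i+1:ℕ):ℝ)) ^ (-a) := by
      intro i; push_cast; ring_nf
    calc ∑ i ∈ Finset.range w, (((1 + (i+1) : ℕ)) : ℝ) ^ (-a)
        = ∑ i ∈ Finset.range w, ((1:ℝ) + ((i+1:ℕ):ℝ)) ^ (-a) := by
          exact Finset.sum_congr rfl fun i _ => heq i
      _ ≤ ∫ x in (1:ℝ)..((1:ℝ) + (w:ℕ)), x ^ (-a) := hint
      _ = ((((w+1:ℕ)):ℝ) ^ (-a+1) - 1) / (-a+1) := by rw [hIval, hcast, Real.one_rpow]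
      _ ≤ (((w+1:ℕ)):ℝ) ^ (1-a) / (1-a) := by
          rw [h1a]
          exact (div_le_div_iff_of_pos_right hb).2 (by linarith)
  have hfirst : (((1 + 0 : ℕ)) : ℝ) ^ (-a) = 1 := by norm_num
  calc (∑ i ∈ Finset.range w, (((1 + (i+1) : ℕ)) : ℝ) ^ (-a)) + (((1 + 0 : ℕ)) : ℝ) ^ (-a)
      ≤ ((w+1:ℕ) : ℝ) ^ (1-a) / (1-a) + 1 := by rw [hfirst]; linarith
    _ ≤ (1 + 1/(1-a)) * ((w+1:ℕ) : ℝ) ^ (1-a) := by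
        rw [div_eq_mul_one_div]
        nlinarith [hvb, one_div_pos.2 hb]

set_option maxHeartbeats 1000000 in
/-- Corollary 2.2 for `ℓ_j = j^{1/n}`, `n ≥ 3`: the fractal exponent
is `1 - (2q-n)/(n(q-1))`. -/
theorem fractal_exponent_power_law
    (n : ℕ) (hn : 3 ≤ n) (q : ℝ) (hq : (n:ℝ)/2 < q) (σ : ℝ) (hσ : 0 ≤ σ)
    (M : ℝ → ℕ → ℝ)
    (hM : ∀ p v, M p v = ∑ j ∈ Finset.Icc 1 v,
      (σ + (j:ℝ) ^ ((1:ℝ)/n)) ^ (-(2*p))) :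
    Filter.Tendsto (fun v : ℕ =>
        (Real.log (M q v) - q * Real.log (M 1 v)) / ((1-q) * Real.log v))
      Filter.atTop (nhds (1 - (2*q - n)/(n*(q-1)))) := by
  have hnR : (3:ℝ) ≤ (n:ℝ) := by exact_mod_cast hn
  have hn0 : (0:ℝ) < (n:ℝ) := by linarith
  have hq1 : 1 < q := by nlinarith
  set b : ℝ := 1 - 2/(n:ℝ) with hbdef
  have ha : (0:ℝ) < 2/(n:ℝ) := by positivity
  have ha1 : 2/(n:ℝ) < 1 := by rw [div_lt_one hn0]; linarith
  have hb : 0 < b := by simp only [hbdef]; linarith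
  have hpos : ∀ j : ℕ, 1 ≤ j → 0 < σ + (j:ℝ) ^ ((1:ℝ)/n) := by
    intro j hj
    have h1 : (0:ℝ) < (j:ℝ) := by exact_mod_cast hj
    have := Real.rpow_pos_of_pos h1 ((1:ℝ)/n)
    linarith
  have hlogv : Tendsto (fun v : ℕ => Real.log v) atTop atTop :=
    Real.tendsto_log_atTop.comp tendsto_natCast_atTop_atTop
  -- Step A : convergence of M q
  have hsummable : Summable (fun i : ℕ => (σ + ((1+i:ℕ):ℝ) ^ ((1:ℝ)/n)) ^ (-(2*q))) := by
    have hexp : (1/(n:ℝ)) * (-(2*q)) < -1 := by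
      rw [one_div_mul_eq_div, div_lt_iff₀ hn0]
      linarith [hq]
    have h0 : Summable (fun m : ℕ => (m:ℝ) ^ ((1/(n:ℝ)) * (-(2*q)))) :=
      summable_nat_rpow.2 hexp
    have h1 : Summable (fun i : ℕ => ((i+1:ℕ):ℝ) ^ ((1/(n:ℝ)) * (-(2*q)))) :=
      (summable_nat_add_iff 1).2 h0
    refine Summable.of_nonneg_of_le (fun i => ?_) (fun i => ?_) h1
    · exact Real.rpow_nonneg (hpos (1+i) (by omega)).le _
    · have hjpos : (0:ℝ) < ((1+i:ℕ):ℝ) := by positivity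
      have hxpos : (0:ℝ) < ((1+i:ℕ):ℝ) ^ ((1:ℝ)/n) := Real.rpow_pos_of_pos hjpos _
      have hle : ((1+i:ℕ):ℝ) ^ ((1:ℝ)/n) ≤ σ + ((1+i:ℕ):ℝ) ^ ((1:ℝ)/n) := by linarith
      have h2 := Real.rpow_le_rpow_of_nonpos hxpos hle (by nlinarith : -(2*q) ≤ 0)
      calc (σ + ((1+i:ℕ):ℝ) ^ ((1:ℝ)/n)) ^ (-(2*q))
          ≤ (((1+i:ℕ):ℝ) ^ ((1:ℝ)/n)) ^ (-(2*q)) := h2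
        _ = ((1+i:ℕ):ℝ) ^ ((1/(n:ℝ)) * (-(2*q))) := by
            rw [Real.rpow_mul hjpos.le]
        _ = ((i+1:ℕ):ℝ) ^ ((1/(n:ℝ)) * (-(2*q))) := by rw [Nat.add_comm]
  set L : ℝ := ∑' i : ℕ, (σ + ((1+i:ℕ):ℝ) ^ ((1:ℝ)/n)) ^ (-(2*q)) with hLdef
  have hLpos : 0 < L := by
    refine Summable.tsum_pos hsummable (fun i => Real.rpow_nonneg (hpos (1+i) (by omega)).le _) 0 ?_
    exact Real.rpow_pos_of_pos (hpos 1 le_rfl) _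
  have hMq : Tendsto (fun v : ℕ => M q v) atTop (nhds L) := by
    have h := hsummable.hasSum.tendsto_sum_nat
    refine h.congr fun v => ?_
    rw [hM q v, sum_Icc_one_eq_range]
  have hA : Tendsto (fun v : ℕ => Real.log (M q v) / Real.log v) atTop (nhds 0) :=
    Tendsto.div_atTop (((Real.continuousAt_log hLpos.ne').tendsto).comp hMq) hlogv
  -- Step C : bounds on M 1
  set c : ℝ := (σ+1) ^ (-(2*(1:ℝ))) with hcdef
  have hc : 0 < c := Real.rpow_pos_of_pos (by linarith) _
  set C : ℝ := 1 + 1/b with hCdef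
  have hC : 0 < C := by positivity
  have hlow : ∀ v : ℕ, 1 ≤ v → c * (v:ℝ) ^ b ≤ M 1 v := by
    intro v hv
    have hvR : (1:ℝ) ≤ (v:ℝ) := by exact_mod_cast hv
    have hvpos : (0:ℝ) < (v:ℝ) := by linarith
    have hvn : (1:ℝ) ≤ (v:ℝ) ^ ((1:ℝ)/n) := Real.one_le_rpow hvR (by positivity)
    have hterm : ∀ j ∈ Finset.Icc 1 v,
        ((σ+1) * (v:ℝ) ^ ((1:ℝ)/n)) ^ (-(2*(1:ℝ)))
          ≤ (σ + (j:ℝ) ^ ((1:ℝ)/n)) ^ (-(2*(1:ℝ))) := by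
      intro j hj
      obtain ⟨hj1, hjv⟩ := Finset.mem_Icc.1 hj
      have hjR : (1:ℝ) ≤ (j:ℝ) := by exact_mod_cast hj1
      have hjvR : (j:ℝ) ≤ (v:ℝ) := by exact_mod_cast hjv
      have h1 : (j:ℝ) ^ ((1:ℝ)/n) ≤ (v:ℝ) ^ ((1:ℝ)/n) :=
        Real.rpow_le_rpow (by linarith) hjvR (by positivity)
      have h2 : σ ≤ σ * (v:ℝ) ^ ((1:ℝ)/n) := le_mul_of_one_le_right hσ hvn
      have h3 : σ + (j:ℝ) ^ ((1:ℝ)/n) ≤ (σ+1) * (v:ℝ) ^ ((1:ℝ)/n) := by nlinarith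
      exact Real.rpow_le_rpow_of_nonpos (hpos j hj1) h3 (by norm_num)
    have hsum := Finset.card_nsmul_le_sum (Finset.Icc 1 v)
      (fun j => (σ + (j:ℝ) ^ ((1:ℝ)/n)) ^ (-(2*(1:ℝ))))
      (((σ+1) * (v:ℝ) ^ ((1:ℝ)/n)) ^ (-(2*(1:ℝ)))) hterm
    rw [Nat.card_Icc, nsmul_eq_mul] at hsum
    have hcard : ((v + 1 - 1 : ℕ) : ℝ) = (v:ℝ) := by norm_num
    rw [hcard] at hsum
    have hcomp : (v:ℝ) * ((σ+1) * (v:ℝ) ^ ((1:ℝ)/n)) ^ (-(2*(1:ℝ))) = c * (v:ℝ) ^ b := by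
      rw [Real.mul_rpow (by linarith : (0:ℝ) ≤ σ+1) (Real.rpow_nonneg hvpos.le _),
        ← Real.rpow_mul hvpos.le, hcdef, hbdef]
      rw [show (v:ℝ) ^ ((1:ℝ)/n * -(2*(1:ℝ))) = (v:ℝ) ^ (-(2/(n:ℝ))) by
        congr 1; field_simp]
      rw [show (1 - 2/(n:ℝ)) = 1 + (-(2/(n:ℝ))) by ring, Real.rpow_add hvpos,
        Real.rpow_one]
      ring
    rw [hM 1 v]
    calc c * (v:ℝ) ^ b = (v:ℝ) * ((σ+1) * (v:ℝ) ^ ((1:ℝ)/n)) ^ (-(2*(1:ℝ))) := hcomp.symm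
      _ ≤ _ := hsum
  have hupp : ∀ v : ℕ, 1 ≤ v → M 1 v ≤ C * (v:ℝ) ^ b := by
    intro v hv
    rw [hM 1 v]
    have hterm : ∀ j ∈ Finset.Icc 1 v,
        (σ + (j:ℝ) ^ ((1:ℝ)/n)) ^ (-(2*(1:ℝ))) ≤ (j:ℝ) ^ (-(2/(n:ℝ))) := by
      intro j hj
      obtain ⟨hj1, _⟩ := Finset.mem_Icc.1 hj
      have hjR : (0:ℝ) < (j:ℝ) := by exact_mod_cast hj1
      have hxpos : (0:ℝ) < (j:ℝ) ^ ((1:ℝ)/n) := Real.rpow_pos_of_pos hjR _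
      have hle : (j:ℝ) ^ ((1:ℝ)/n) ≤ σ + (j:ℝ) ^ ((1:ℝ)/n) := by linarith
      have h2 := Real.rpow_le_rpow_of_nonpos hxpos hle (by norm_num : -(2*(1:ℝ)) ≤ 0)
      calc (σ + (j:ℝ) ^ ((1:ℝ)/n)) ^ (-(2*(1:ℝ)))
          ≤ ((j:ℝ) ^ ((1:ℝ)/n)) ^ (-(2*(1:ℝ))) := h2
        _ = (j:ℝ) ^ (-(2/(n:ℝ))) := by
            rw [← Real.rpow_mul hjR.le]; congr 1; field_simp
    calc ∑ j ∈ Finset.Icc 1 v, (σ + (j:ℝ) ^ ((1:ℝ)/n)) ^ (-(2*(1:ℝ)))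
        ≤ ∑ j ∈ Finset.Icc 1 v, (j:ℝ) ^ (-(2/(n:ℝ))) := Finset.sum_le_sum hterm
      _ ≤ (1 + 1/(1 - 2/(n:ℝ))) * (v:ℝ) ^ (1 - 2/(n:ℝ)) := sum_rpow_neg_le _ ha ha1 v hv
      _ = C * (v:ℝ) ^ b := by rw [hCdef, hbdef]
  -- Step B : log ratio tends to b
  have hB : Tendsto (fun v : ℕ => Real.log (M 1 v) / Real.log v) atTop (nhds b) := by
    have hlowlim : Tendsto (fun v : ℕ => b + Real.log c / Real.log v) atTop (nhds b) := by
      have := Tendsto.div_atTop (tendsto_const_nhds (x := Real.log c)) hlogv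
      simpa using (tendsto_const_nhds (x := b)).add this
    have hupplim : Tendsto (fun v : ℕ => b + Real.log C / Real.log v) atTop (nhds b) := by
      have := Tendsto.div_atTop (tendsto_const_nhds (x := Real.log C)) hlogv
      simpa using (tendsto_const_nhds (x := b)).add this
    refine tendsto_of_tendsto_of_tendsto_of_le_of_le' hlowlim hupplim ?_ ?_
    · filter_upwards [eventually_ge_atTop 2] with v hv
      have hvR : (2:ℝ) ≤ (v:ℝ) := by exact_mod_cast hv
      have hvpos : (0:ℝ) < (v:ℝ) := by linarith
      have hlogpos : 0 < Real.log v := Real.log_pos (by linarith)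
      have hbound := hlow v (by omega)
      have hMpos : 0 < M 1 v := lt_of_lt_of_le (by positivity) hbound
      have hlog : Real.log c + b * Real.log v ≤ Real.log (M 1 v) := by
        have := Real.log_le_log (by positivity) hbound
        rwa [Real.log_mul hc.ne' (Real.rpow_pos_of_pos hvpos b).ne',
          Real.log_rpow hvpos] at this
      rw [← sub_nonneg]
      have : Real.log (M 1 v) / Real.log v - (b + Real.log c / Real.log v)
          = (Real.log (M 1 v) - (Real.log c + b * Real.log v)) / Real.log v := by
        field_simp; ring
      rw [this]
      exact div_nonneg (by linarith) hlogpos.le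
    · filter_upwards [eventually_ge_atTop 2] with v hv
      have hvR : (2:ℝ) ≤ (v:ℝ) := by exact_mod_cast hv
      have hvpos : (0:ℝ) < (v:ℝ) := by linarith
      have hlogpos : 0 < Real.log v := Real.log_pos (by linarith)
      have hbound := hupp v (by omega)
      have hbound0 := hlow v (by omega)
      have hMpos : 0 < M 1 v := lt_of_lt_of_le (by positivity) hbound0
      have hlog : Real.log (M 1 v) ≤ Real.log C + b * Real.log v := by
        have := Real.log_le_log hMpos hbound
        rwa [Real.log_mul hC.ne' (Real.rpow_pos_of_pos hvpos b).ne',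
          Real.log_rpow hvpos] at this
      rw [← sub_nonneg]
      have : (b + Real.log C / Real.log v) - Real.log (M 1 v) / Real.log v
          = ((Real.log C + b * Real.log v) - Real.log (M 1 v)) / Real.log v := by
        field_simp; ring
      rw [this]
      exact div_nonneg (by linarith) hlogpos.le
  -- Step D : combine
  have hcomb := (hA.sub (hB.const_mul q)).mul_const (1/(1-q))
  have hval : (0 - q * b) * (1/(1-q)) = 1 - (2*q - (n:ℝ))/((n:ℝ)*(q-1)) := by
    rw [hbdef]
    have h1 : (n:ℝ) ≠ 0 := hn0.ne'
    have h2 : (1:ℝ) - q ≠ 0 := by intro h; nlinarith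
    have h3 : q - 1 ≠ 0 := by intro h; nlinarith
    field_simp
    ring
  rw [hval] at hcomb
  refine hcomb.congr' ?_
  filter_upwards [eventually_ge_atTop 2] with v hv
  have hvR : (2:ℝ) ≤ (v:ℝ) := by exact_mod_cast hv
  have hlogpos : 0 < Real.log v := Real.log_pos (by linarith)
  have h2 : (1:ℝ) - q ≠ 0 := by intro h; nlinarith
  have hstep : Real.log (M q v) / Real.log v - q * (Real.log (M 1 v) / Real.log v)
      = (Real.log (M q v) - q * Real.log (M 1 v)) / Real.log v := by
    rw [sub_div, mul_div_assoc]
  rw [hstep, mul_one_div, div_div, mul_comm (Real.log (v:ℝ)) (1-q)]
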